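/- Let q be a prime power and k, n ∈ N. Let I ⊆ Z_{≥0}^n be a set such that every α ∈ I satisfies |α| := α_1 + ⋯ + α_n < k(q-1), and such that the values |α| for α ∈ I are pairwise distinct. Let c_α ∈ F_q for α ∈ I, and let b ∈ F_q with b ≠ 0. Suppose that for every β ∈ Z_{≥0}^n with |β| < k and every nonzero ρ ∈ F_q, the value f_β(ρ) = Σ_{α ∈ I} b^{α_n - β_n} c_α binom(α, β) ρ^{|α| - |β|} is zero (where b^{α_n - β_n} is interpreted in F_q, negative exponents being inverses). Then c_α = 0 for all α ∈ I. -/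

import Mathlib

open Polynomial Finset

lemma vand_tuple (n j : ℕ) (α : Fin n → ℕ) :
    ∑ l ∈ Finset.finsuppAntidiag (Finset.univ : Finset (Fin n)) j,
      ∏ i, (α i).choose (l i) = (∑ i, α i).choose j := by
  have hc : ∀ m d : ℕ, (PowerSeries.coeff (R := ℕ) d) ((1 + PowerSeries.X) ^ m) = m.choose d := by
    intro m d
    have h1 : (1 + PowerSeries.X : PowerSeries ℕ)
        = ((1 + Polynomial.X : Polynomial ℕ) : PowerSeries ℕ) := by
      rw [Polynomial.coe_add, Polynomial.coe_one, Polynomial.coe_X]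
    rw [h1, ← Polynomial.coe_pow, Polynomial.coeff_coe, Polynomial.coeff_one_add_X_pow]
    exact Nat.cast_id _
  have key := congrArg (PowerSeries.coeff (R := ℕ) j)
      (Finset.prod_pow_eq_pow_sum Finset.univ α (1 + PowerSeries.X : PowerSeries ℕ))
  rw [PowerSeries.coeff_prod, hc] at key
  simpa only [hc] using key

/-- The key lemma (Lemma 3.1): let `I` be a set of exponents `α ∈ Z_{≥0}^n` with `|α| < k(q-1)`
and with the values `|α|` pairwise distinct, let `c_α ∈ F_q` and `b ∈ F_q` with `b ≠ 0`;
if for every `β` with `|β| < k` and every nonzero `ρ ∈ F_q` the value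
`f_β(ρ) = Σ_{α ∈ I} b^{α_n - β_n} c_α binom(α,β) ρ^{|α| - |β|}` is zero, then `c_α = 0`
for all `α ∈ I`. (Exponents of `b` and `ρ` are integers; negative powers are inverses.) -/
theorem brk_key_lemma {F : Type*} [Field F] [Fintype F] (q k n : ℕ)
    (hq : Fintype.card F = q) (hn : 0 < n)
    (I : Finset (Fin n → ℕ))
    (hIdeg : ∀ α ∈ I, (∑ i, α i) < k * (q - 1))
    (hIdist : ∀ α ∈ I, ∀ α' ∈ I, (∑ i, α i) = (∑ i, α' i) → α = α')
    (c : (Fin n → ℕ) → F) (b : F) (hb : b ≠ 0)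
    (hf : ∀ β : Fin n → ℕ, (∑ i, β i) < k → ∀ ρ : F, ρ ≠ 0 →
      ∑ α ∈ I,
        b ^ ((α ⟨n - 1, Nat.sub_lt hn Nat.one_pos⟩ : ℤ) - (β ⟨n - 1, Nat.sub_lt hn Nat.one_pos⟩ : ℤ)) *
          c α * ((∏ i, Nat.choose (α i) (β i) : ℕ) : F) *
          ρ ^ (((∑ i, α i : ℕ) : ℤ) - ((∑ i, β i : ℕ) : ℤ)) = 0) :
    ∀ α ∈ I, c α = 0 := by
  classical
  intro α₀ hα₀
  set nn : Fin n := ⟨n - 1, Nat.sub_lt hn Nat.one_pos⟩ with hnn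
  by_cases hk0 : k * (q - 1) = 0
  · exact absurd (hIdeg α₀ hα₀) (by omega)
  set Q : Polynomial F := ∑ α ∈ I, Polynomial.monomial (∑ i, α i) (c α * b ^ (α nn)) with hQdef
  -- Step 1: Hasse derivatives of Q of order < k vanish at all nonzero points
  have hder : ∀ j < k, ∀ ρ : F, ρ ≠ 0 → (Polynomial.hasseDeriv j Q).eval ρ = 0 := by
    intro j hj ρ hρ
    have heval : (Polynomial.hasseDeriv j Q).eval ρ
        = ∑ α ∈ I, c α * b ^ (α nn) * ((∑ i, α i).choose j) * ρ ^ ((∑ i, α i) - j) := by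
      rw [hQdef, map_sum, Polynomial.eval_finset_sum]
      refine Finset.sum_congr rfl fun α _ => ?_
      rw [Polynomial.hasseDeriv_monomial, Polynomial.eval_monomial]
      ring
    rw [heval]
    have hterm : ∀ α ∈ I, c α * b ^ (α nn) * ((∑ i, α i).choose j) * ρ ^ ((∑ i, α i) - j)
        = ∑ l ∈ Finset.finsuppAntidiag (Finset.univ : Finset (Fin n)) j,
            b ^ ((l : Fin n → ℕ) nn : ℤ) *
              (b ^ ((α nn : ℤ) - ((l : Fin n → ℕ) nn : ℤ)) * c α *
                ((∏ i, Nat.choose (α i) ((l : Fin n → ℕ) i) : ℕ) : F) *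
                ρ ^ (((∑ i, α i : ℕ) : ℤ) - ((j : ℕ) : ℤ))) := by
      intro α _
      have hbl : ∀ l : Fin n →₀ ℕ,
          b ^ ((l : Fin n → ℕ) nn : ℤ) * b ^ ((α nn : ℤ) - ((l : Fin n → ℕ) nn : ℤ))
            = b ^ (α nn) := by
        intro l
        rw [← zpow_add₀ hb, add_sub_cancel, zpow_natCast]
      calc c α * b ^ (α nn) * ((∑ i, α i).choose j) * ρ ^ ((∑ i, α i) - j)
          = (∑ l ∈ Finset.finsuppAntidiag (Finset.univ : Finset (Fin n)) j,
              ((∏ i, Nat.choose (α i) ((l : Fin n → ℕ) i) : ℕ) : F)) *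
              (c α * b ^ (α nn) * ρ ^ ((∑ i, α i) - j)) := by
            rw [← Nat.cast_sum, vand_tuple n j α]
            ring
        _ = _ := by
            rw [Finset.sum_mul]
            refine Finset.sum_congr rfl fun l hl => ?_
            have hlsum : (∑ i, (l : Fin n → ℕ) i) = j := by
              have := (Finset.mem_finsuppAntidiag.mp hl).1
              simpa using this
            rw [show b ^ ((l : Fin n → ℕ) nn : ℤ) *
                (b ^ ((α nn : ℤ) - ((l : Fin n → ℕ) nn : ℤ)) * c α *
                  ((∏ i, Nat.choose (α i) ((l : Fin n → ℕ) i) : ℕ) : F) *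
                  ρ ^ (((∑ i, α i : ℕ) : ℤ) - ((j : ℕ) : ℤ)))
              = b ^ (α nn) * (c α *
                  ((∏ i, Nat.choose (α i) ((l : Fin n → ℕ) i) : ℕ) : F) *
                  ρ ^ (((∑ i, α i : ℕ) : ℤ) - ((j : ℕ) : ℤ))) from by rw [← hbl l]; ring]
            by_cases hle : j ≤ ∑ i, α i
            · rw [show ((∑ i, α i : ℕ) : ℤ) - ((j : ℕ) : ℤ)
                  = (((∑ i, α i) - j : ℕ) : ℤ) from by omega, zpow_natCast]
              ring
            · have hex : ∃ i, α i < (l : Fin n → ℕ) i := by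
                by_contra hno
                push_neg at hno
                have hsle : (∑ i, (l : Fin n → ℕ) i) ≤ ∑ i, α i :=
                  Finset.sum_le_sum fun i _ => hno i
                omega
              obtain ⟨i, hi⟩ := hex
              have h0 : ∏ i, Nat.choose (α i) ((l : Fin n → ℕ) i) = 0 :=
                Finset.prod_eq_zero (Finset.mem_univ i) (Nat.choose_eq_zero_of_lt hi)
              rw [h0]
              simp
    rw [Finset.sum_congr rfl hterm, Finset.sum_comm]
    refine Finset.sum_eq_zero fun l hl => ?_
    rw [← Finset.mul_sum]
    have hlsum : (∑ i, (l : Fin n → ℕ) i) = j := by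
      have := (Finset.mem_finsuppAntidiag.mp hl).1
      simpa using this
    have h := hf (l : Fin n → ℕ) (by rw [hlsum]; exact hj) ρ hρ
    rw [hlsum] at h
    rw [h, mul_zero]
  -- Step 2: Q = 0
  have hQ0 : Q = 0 := by
    by_contra hQ
    set S : Finset F := (Finset.univ : Finset F).erase 0 with hS
    have hcard : S.card = q - 1 := by
      rw [hS, Finset.card_erase_of_mem (Finset.mem_univ 0), Finset.card_univ, hq]
    set P : Polynomial F := ∏ ρ ∈ S, (Polynomial.X - Polynomial.C ρ) ^ k with hP
    have hmon : ∀ ρ ∈ S, ((Polynomial.X - Polynomial.C ρ) ^ k).Monic :=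
      fun ρ _ => (Polynomial.monic_X_sub_C ρ).pow k
    have hPdeg : P.natDegree = (q - 1) * k := by
      rw [hP, Polynomial.natDegree_prod_of_monic _ _ hmon]
      simp only [Polynomial.natDegree_pow, Polynomial.natDegree_X_sub_C, mul_one]
      rw [Finset.sum_const, hcard, smul_eq_mul]
    have hdvd : ∀ ρ ∈ S, (Polynomial.X - Polynomial.C ρ) ^ k ∣ Q := by
      intro ρ hρS
      have hρ : ρ ≠ 0 := (Finset.mem_erase.mp hρS).1
      have hX : Polynomial.X ^ k ∣ Polynomial.taylor ρ Q := by
        rw [Polynomial.X_pow_dvd_iff]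
        intro d hd
        rw [Polynomial.taylor_coeff]
        exact hder d hd ρ hρ
      obtain ⟨g, hg⟩ := hX
      refine ⟨Polynomial.taylor (-ρ) g, ?_⟩
      have h2 := congrArg (Polynomial.taylor (-ρ)) hg
      rw [Polynomial.taylor_taylor] at h2
      simp only [neg_add_cancel, Polynomial.taylor_zero'] at h2
      rw [LinearMap.id_apply] at h2
      rw [h2]
      simp only [Polynomial.taylor_apply, Polynomial.mul_comp, Polynomial.pow_comp,
        Polynomial.X_comp, map_neg, ← sub_eq_add_neg]
    have hPdvd : P ∣ Q := by
      refine Finset.prod_dvd_of_coprime ?_ hdvd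
      intro ρ hρ σ hσ hne
      exact (Polynomial.pairwise_coprime_X_sub_C Function.injective_id hne).pow
    have hQdeg : Q.natDegree < k * (q - 1) := by
      have h1 : Q.natDegree ≤ k * (q - 1) - 1 := by
        rw [hQdef]
        refine Polynomial.natDegree_sum_le_of_forall_le _ _ fun α hα => ?_
        exact (Polynomial.natDegree_monomial_le _).trans (by have := hIdeg α hα; omega)
      omega
    have hle := Polynomial.natDegree_le_of_dvd hPdvd hQ
    rw [hPdeg, mul_comm] at hle
    omega
  -- Step 3: extract coefficient
  have hcoef := congrArg (fun p => Polynomial.coeff p (∑ i, α₀ i)) hQ0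
  simp only [hQdef, Polynomial.finset_sum_coeff, Polynomial.coeff_monomial,
    Polynomial.coeff_zero] at hcoef
  rw [Finset.sum_eq_single_of_mem α₀ hα₀ (fun β hβ hne => by
    rw [if_neg (fun h => hne (hIdist β hβ α₀ hα₀ h))]), if_pos rfl] at hcoef
  rcases mul_eq_zero.mp hcoef with h | h
  · exact h
  · exact absurd h (pow_ne_zero _ hb)
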